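/- For β ∈ T_n, the matrix ψ_{n+1}(ι^L(β)) has block form [[1, w],[0, ψ_n(β)]] for some row vector w of length n−1, i.e., the first column of ψ_{n+1}(ι^L(β)) is the standard basis vector e_1. -/

import Mathlib

open Matrix Polynomial

/-- Deformed Tits matrix `V_i` (generator index `i` is 1-based, `1 ≤ i ≤ m`):
the identity `m × m` matrix except column `i`, which has `-1` on the diagonal,
`y` in row `i-1` and `x` in row `i+1`. -/
def Vmat {R : Type*} [CommRing R] (x y : R) (m i : ℕ) : Matrix (Fin m) (Fin m) R :=
  Matrix.of fun r c =>
    if (c : ℕ) + 1 = i then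
      if (r : ℕ) + 1 = i then -1
      else if (r : ℕ) + 2 = i then y
      else if (r : ℕ) = i then x
      else 0
    else if r = c then 1 else 0

/-- Relators of the twin group with `m` generators (the twin group on `m+1` strands). -/
def twinRels (m : ℕ) : Set (FreeGroup (Fin m)) :=
  {r | (∃ i, r = FreeGroup.of i * FreeGroup.of i) ∨
       (∃ i j : Fin m, (i : ℕ) + 1 < (j : ℕ) ∧
          r = FreeGroup.of i * FreeGroup.of j * (FreeGroup.of i)⁻¹ * (FreeGroup.of j)⁻¹)}

/-- The twin group `T_{m+1}` on `m+1` strands, with `m` generators `t_1, …, t_m`;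
the generator `t_{i+1}` is `TwinGroup.of i` for `i : Fin m`. -/
def TwinGroup (m : ℕ) : Type := PresentedGroup (twinRels m)

instance (m : ℕ) : Group (TwinGroup m) :=
  inferInstanceAs (Group (PresentedGroup (twinRels m)))

/-- The generator `t_{i+1}` of the twin group. -/
def TwinGroup.of {m : ℕ} (i : Fin m) : TwinGroup m := PresentedGroup.of i

/-- The ring `ℤ[x,y]`. -/
noncomputable abbrev Lam : Type := MvPolynomial (Fin 2) ℤ

/-- The variable `x` of `ℤ[x,y]`. -/
noncomputable def xP : Lam := MvPolynomial.X 0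

/-- The variable `y` of `ℤ[x,y]`. -/
noncomputable def yP : Lam := MvPolynomial.X 1

/-- For `β ∈ T_n` (`n = m+1`), `ψ_{n+1}(ι^L(β))` has block form
`[[1, w], [0, ψ_n(β)]]`: its first column is the standard basis vector `e_1`
and its bottom-right `(n-1)×(n-1)` block is `ψ_n(β)`. -/
theorem stmt10 (m : ℕ) (hm : 1 ≤ m)
    (ψ : TwinGroup m →* Matrix (Fin m) (Fin m) Lam)
    (hψ : ∀ i : Fin m, ψ (TwinGroup.of i) = Vmat xP yP m ((i : ℕ) + 1))
    (ψ' : TwinGroup (m+1) →* Matrix (Fin (m+1)) (Fin (m+1)) Lam)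
    (hψ' : ∀ i : Fin (m+1), ψ' (TwinGroup.of i) = Vmat xP yP (m+1) ((i : ℕ) + 1))
    (ιL : TwinGroup m →* TwinGroup (m+1))
    (hιL : ∀ i : Fin m, ιL (TwinGroup.of i) = TwinGroup.of i.succ)
    (β : TwinGroup m) :
    (∀ r : Fin (m+1), ψ' (ιL β) r 0 = if r = 0 then 1 else 0) ∧
    (∀ r c : Fin m, ψ' (ιL β) r.succ c.succ = ψ β r c) := by
  -- The predicate we prove by induction on the generators.
  set P : TwinGroup m → Prop := fun g =>
    (∀ r : Fin (m+1), ψ' (ιL g) r 0 = if r = 0 then 1 else 0) ∧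
    (∀ r c : Fin m, ψ' (ιL g) r.succ c.succ = ψ g r c) with hP
  suffices h : P β from h
  have hβ : β ∈ Subgroup.closure (Set.range (TwinGroup.of : Fin m → TwinGroup m)) := by
    change β ∈ Subgroup.closure (Set.range (PresentedGroup.of : Fin m → PresentedGroup (twinRels m)))
    rw [PresentedGroup.closure_range_of]
    trivial
  refine Subgroup.closure_induction (p := fun g _ => P g) ?_ ?_ ?_ ?_ hβ
  · -- generators
    rintro _ ⟨i, rfl⟩
    constructor
    · intro r
      rw [hιL, hψ']
      simp only [Vmat, Matrix.of_apply, Fin.val_succ, Fin.val_zero, Fin.ext_iff]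
      split_ifs <;> first | rfl | omega
    · intro r c
      rw [hιL, hψ', hψ]
      simp only [Vmat, Matrix.of_apply, Fin.val_succ, Fin.ext_iff]
      split_ifs <;> first | rfl | omega
  · -- one
    constructor
    · intro r
      simp [Matrix.one_apply]
    · intro r c
      simp [Matrix.one_apply, Fin.succ_inj]
  · -- mul
    rintro a b - - ⟨ha1, ha2⟩ ⟨hb1, hb2⟩
    constructor
    · intro r
      rw [_root_.map_mul, _root_.map_mul, Matrix.mul_apply]
      simp only [hb1, mul_ite, mul_one, mul_zero]
      simp [ha1]
    · intro r c
      rw [_root_.map_mul, _root_.map_mul, _root_.map_mul, Matrix.mul_apply, Matrix.mul_apply, Fin.sum_univ_succ]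
      have h0 : ψ' (ιL a) r.succ 0 = 0 := by
        rw [ha1]; simp [Fin.succ_ne_zero]
      rw [h0, zero_mul, zero_add]
      exact Finset.sum_congr rfl fun j _ => by rw [ha2, hb2]
  · -- inv
    rintro a - ⟨ha1, ha2⟩
    have hBA : ψ' (ιL a⁻¹) * ψ' (ιL a) = 1 := by
      rw [← _root_.map_mul, ← _root_.map_mul, inv_mul_cancel, _root_.map_one, _root_.map_one]
    have hAB : ψ' (ιL a) * ψ' (ιL a⁻¹) = 1 := by
      rw [← _root_.map_mul, ← _root_.map_mul, mul_inv_cancel, _root_.map_one, _root_.map_one]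
    have hcol : ∀ r : Fin (m+1), ψ' (ιL a⁻¹) r 0 = if r = 0 then 1 else 0 := by
      intro r
      have := congrFun (congrFun hBA r) 0
      rw [Matrix.mul_apply] at this
      simp only [ha1, mul_ite, mul_one, mul_zero] at this
      simpa [Matrix.one_apply] using this
    refine ⟨hcol, ?_⟩
    set N : Matrix (Fin m) (Fin m) Lam := fun r c => ψ' (ιL a⁻¹) r.succ c.succ with hN
    have hψN : ψ a * N = 1 := by
      refine Matrix.ext fun r c => ?_
      have : (ψ' (ιL a) * ψ' (ιL a⁻¹)) r.succ c.succ =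
          (1 : Matrix (Fin (m+1)) (Fin (m+1)) Lam) r.succ c.succ := by rw [hAB]
      rw [Matrix.mul_apply, Fin.sum_univ_succ] at this
      have h0 : ψ' (ιL a) r.succ 0 = 0 := by
        rw [ha1]; simp [Fin.succ_ne_zero]
      rw [h0, zero_mul, zero_add] at this
      rw [Matrix.mul_apply]
      calc ∑ j, ψ a r j * N j c = ∑ j, ψ' (ιL a) r.succ j.succ * ψ' (ιL a⁻¹) j.succ c.succ :=
            Finset.sum_congr rfl fun j _ => by rw [ha2, hN]
        _ = (1 : Matrix (Fin (m+1)) (Fin (m+1)) Lam) r.succ c.succ := by convert this using 2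
        _ = (1 : Matrix (Fin m) (Fin m) Lam) r c := by
            simp [Matrix.one_apply, Fin.succ_inj]
    have hNψ : N = ψ a⁻¹ := by
      have h1 : ψ a⁻¹ * ψ a = 1 := by rw [← _root_.map_mul, inv_mul_cancel, _root_.map_one]
      calc N = 1 * N := (one_mul N).symm
        _ = ψ a⁻¹ * ψ a * N := by rw [h1]
        _ = ψ a⁻¹ * (ψ a * N) := by rw [mul_assoc]
        _ = ψ a⁻¹ := by rw [hψN, mul_one]
    intro r c
    rw [← hNψ]
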